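/- Let ρ > 0, ε ∈ [0,1), ν ∈ [0,1] and m₁ ∈ ℝ. Define b(u) = (m₁u/(1−ε))·(1 + νρu/2)/(2+ρu), k(u) = ((1−ε)/2)·b(u) + m₁/(2ρ), and c(u) = −((1−ν)²/(1−ε))·(m₁²/ρ²)·[1/2 − 1/(2+ρu)] − (ν·m₁²/(ρ²(1−ε)))·[(1/2 − ν/4)·ρu + (ν/8)·ρ²u² + (ν/48)·ρ³u³]. Then c(0) = 0 and, for all u ≥ 0, c'(u) = (1−ν)·m₁·b(u) − (ρ/(1−ε))·k(u)². -/

import Mathlib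

set_option maxHeartbeats 1000000


/-- b(u) in the critical case η = 0: b(u) = (m₁u/(1−ε))·(1 + νρu/2)/(2+ρu). -/
noncomputable def bCrit (ρ ε ν m₁ : ℝ) (u : ℝ) : ℝ :=
  (m₁ * u / (1 - ε)) * (1 + ν * ρ * u / 2) / (2 + ρ * u)

/-- k(u) = ((1−ε)/2)·b(u) + m₁/(2ρ) in the critical case. -/
noncomputable def kCrit (ρ ε ν m₁ : ℝ) (u : ℝ) : ℝ :=
  ((1 - ε) / 2) * bCrit ρ ε ν m₁ u + m₁ / (2 * ρ)

/-- c(u) in the critical case η = 0. -/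
noncomputable def cCrit (ρ ε ν m₁ : ℝ) (u : ℝ) : ℝ :=
  -((1 - ν) ^ 2 / (1 - ε)) * (m₁ ^ 2 / ρ ^ 2) * (1 / 2 - 1 / (2 + ρ * u))
    - (ν * m₁ ^ 2 / (ρ ^ 2 * (1 - ε)))
        * ((1 / 2 - ν / 4) * (ρ * u) + (ν / 8) * (ρ * u) ^ 2 + (ν / 48) * (ρ * u) ^ 3)

theorem cCrit_ODE (ρ ε ν m₁ : ℝ) (hρ : 0 < ρ) (hε : ε ∈ Set.Ico (0:ℝ) 1)
    (hν : ν ∈ Set.Icc (0:ℝ) 1) :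
    cCrit ρ ε ν m₁ 0 = 0 ∧
    ∀ u : ℝ, 0 ≤ u →
      HasDerivAt (cCrit ρ ε ν m₁)
        ((1 - ν) * m₁ * bCrit ρ ε ν m₁ u - (ρ / (1 - ε)) * (kCrit ρ ε ν m₁ u) ^ 2) u := by
  have hε1 : (1 : ℝ) - ε ≠ 0 := by
    have := hε.2; intro h; nlinarith
  have hρ' : ρ ≠ 0 := ne_of_gt hρ
  constructor
  · simp [cCrit]
  · intro u hu
    have h2 : (2 + ρ * u) ≠ 0 := by positivity
    -- derivative of the linear function 2 + ρ x
    have hlin : HasDerivAt (fun x : ℝ => 2 + ρ * x) ρ u := by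
      simpa using ((hasDerivAt_id u).const_mul ρ).const_add 2
    have hinv : HasDerivAt (fun x : ℝ => 1 / (2 + ρ * x)) (-ρ / (2 + ρ * u) ^ 2) u := by
      have := hlin.inv h2
      simp only [one_div]
      exact this
    have hfirst : HasDerivAt (fun x : ℝ =>
        -((1 - ν) ^ 2 / (1 - ε)) * (m₁ ^ 2 / ρ ^ 2) * (1 / 2 - 1 / (2 + ρ * x)))
        (-((1 - ν) ^ 2 / (1 - ε)) * (m₁ ^ 2 / ρ ^ 2) * (-(-ρ / (2 + ρ * u) ^ 2))) u := by
      exact ((hinv.const_sub (1/2)).const_mul _)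
    have hpoly : HasDerivAt (fun x : ℝ =>
        (1 / 2 - ν / 4) * (ρ * x) + (ν / 8) * (ρ * x) ^ 2 + (ν / 48) * (ρ * x) ^ 3)
        ((1 / 2 - ν / 4) * ρ + (ν / 8) * (2 * (ρ * u) * ρ) + (ν / 48) * (3 * (ρ * u) ^ 2 * ρ))
        u := by
      have hx : HasDerivAt (fun x : ℝ => ρ * x) ρ u := by
        simpa using (hasDerivAt_id u).const_mul ρ
      exact (((hx.const_mul _).add ((hx.pow 2).const_mul _)).add ((hx.pow 3).const_mul _)).congr_deriv (by ring)
    have hsecond := (hpoly.const_mul (ν * m₁ ^ 2 / (ρ ^ 2 * (1 - ε))))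
    have hc := hfirst.sub hsecond
    have : HasDerivAt (cCrit ρ ε ν m₁) _ u := hc
    convert this using 1
    simp only [kCrit, bCrit]
    field_simp
    ring
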